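/- arXiv:1706.01393 — 5 statements merged into one kernel-verified Lean document; each statement's English description precedes it below -/
import Mathlib

section
/- For all vectors a, w in d-dimensional Euclidean space ℝ^d, one has ‖a+w‖²/(1+‖a+w‖²) − ‖a‖²/(1+‖a‖²) − 2⟨a,w⟩/(1+‖a‖²)² ≤ ‖w‖²/(1+‖a‖²)². -/
/-- Jump estimate for `H(r) = r²/(1+r²)`:
`H(‖a+w‖) − H(‖a‖) − 2⟨a,w⟩/(1+‖a‖²)² ≤ ‖w‖²/(1+‖a‖²)²`. -/
theorem H_jump_estimate
    (d : ℕ) (a w : EuclideanSpace ℝ (Fin d)) :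
    ‖a + w‖ ^ 2 / (1 + ‖a + w‖ ^ 2) - ‖a‖ ^ 2 / (1 + ‖a‖ ^ 2)
        - 2 * (inner ℝ a w : ℝ) / (1 + ‖a‖ ^ 2) ^ 2
      ≤ ‖w‖ ^ 2 / (1 + ‖a‖ ^ 2) ^ 2 := by
  set A := ‖a‖ ^ 2 with hA
  set B := ‖a + w‖ ^ 2 with hBdef
  have hB : B = A + 2 * (inner ℝ a w : ℝ) + ‖w‖ ^ 2 := by
    rw [hBdef, hA, norm_add_sq_real]
  have hA0 : (0:ℝ) ≤ A := by positivity
  have hB0 : (0:ℝ) ≤ B := by positivity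
  have h1A : (0:ℝ) < 1 + A := by linarith
  have h1B : (0:ℝ) < 1 + B := by linarith
  have ht : 2 * (inner ℝ a w : ℝ) = B - A - ‖w‖ ^ 2 := by linarith
  rw [ht]
  rw [div_sub_div _ _ (ne_of_gt h1B) (ne_of_gt h1A), div_sub_div _ _ (by positivity) (by positivity), div_le_div_iff₀ (by positivity) (by positivity)]
  nlinarith [sq_nonneg (B - A), sq_nonneg (1+A), mul_pos h1A h1B, sq_nonneg ((B-A)*(1+A)), mul_nonneg (mul_nonneg (sq_nonneg (B-A)) (le_of_lt h1A)) (le_of_lt h1B), sq_nonneg ‖w‖, mul_nonneg (sq_nonneg ‖w‖) h1B.le]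
end

section
/- Let δ > 0 and let x, y be vectors in d-dimensional Euclidean space ℝ^d with x ≠ 0 and ‖x+y‖ ≥ δ‖x‖. Then 1/‖x+y‖² − 1/‖x‖² + 2⟨x,y⟩/‖x‖⁴ ≤ K · max(‖y‖², |⟨x,y⟩|)/‖x‖⁴, where K := 2·max(1, 1/δ²). -/
set_option maxHeartbeats 1000000


/-- Combined second-order Taylor estimate for `V(r) = r⁻²` (eq-|x|-2-estimate):
if `x ≠ 0` and `‖x+y‖ ≥ δ‖x‖` with `δ > 0`, then
`1/‖x+y‖² − 1/‖x‖² + 2⟨x,y⟩/‖x‖⁴ ≤ K·max(‖y‖², |⟨x,y⟩|)/‖x‖⁴` with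
`K = 2·max(1, 1/δ²)`. -/
theorem V_taylor_estimate
    (d : ℕ) (δ : ℝ) (hδ : 0 < δ) (x y : EuclideanSpace ℝ (Fin d))
    (hx : x ≠ 0) (hlow : δ * ‖x‖ ≤ ‖x + y‖) :
    1 / ‖x + y‖ ^ 2 - 1 / ‖x‖ ^ 2 + 2 * (inner ℝ x y : ℝ) / ‖x‖ ^ 4
      ≤ (2 * max 1 (1 / δ ^ 2)) * max (‖y‖ ^ 2) |(inner ℝ x y : ℝ)| / ‖x‖ ^ 4 := by
  set s : ℝ := (inner ℝ x y : ℝ) with hs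
  have hxpos : (0:ℝ) < ‖x‖ := norm_pos_iff.mpr hx
  have hbpos : (0:ℝ) < ‖x + y‖ := lt_of_lt_of_le (by positivity) hlow
  set a : ℝ := ‖x‖ ^ 2 with ha
  set n : ℝ := ‖y‖ ^ 2 with hn
  set b : ℝ := ‖x + y‖ ^ 2 with hb
  have hapos : 0 < a := by positivity
  have hbpos' : 0 < b := by positivity
  have hnn : 0 ≤ n := by positivity
  have hexp : b = a + 2 * s + n := by
    rw [hb, ha, hn, hs, @norm_add_sq_real]
  have hCS : s ^ 2 ≤ a * n := by
    have h1 : |s| ≤ ‖x‖ * ‖y‖ := abs_real_inner_le_norm x y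
    have h2 := mul_self_le_mul_self (abs_nonneg s) h1
    calc s ^ 2 = |s| * |s| := by rw [← sq_abs]; ring
    _ ≤ (‖x‖ * ‖y‖) * (‖x‖ * ‖y‖) := h2
    _ = a * n := by rw [ha, hn]; ring
  set M : ℝ := max (‖y‖ ^ 2) |s| with hM
  have hMn : n ≤ M := le_max_left _ _
  have hMs : |s| ≤ M := le_max_right _ _
  have hM0 : 0 ≤ M := le_trans hnn hMn
  set K : ℝ := 2 * max 1 (1 / δ ^ 2) with hK
  have hK2 : 2 ≤ K := by
    have h := le_max_left (1:ℝ) (1 / δ ^ 2)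
    rw [hK]; linarith
  have hKb2b : 2 * b ≤ K * b := by nlinarith
  have hKb2a : 2 * a ≤ K * b := by
    have hδb : δ ^ 2 * a ≤ b := by
      have h := mul_self_le_mul_self (by positivity : (0:ℝ) ≤ δ * ‖x‖) hlow
      calc δ ^ 2 * a = (δ * ‖x‖) * (δ * ‖x‖) := by rw [ha]; ring
      _ ≤ ‖x + y‖ * ‖x + y‖ := h
      _ = b := by rw [hb]; ring
    have h1 : 1 / δ ^ 2 ≤ max 1 (1 / δ ^ 2) := le_max_right _ _
    have hδ2 : 0 < δ ^ 2 := by positivity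
    have h3 : 2 * (1 / δ ^ 2) * (δ ^ 2 * a) ≤ K * b := by
      apply mul_le_mul (by rw [hK]; nlinarith) hδb (by positivity) (by nlinarith)
    have h4 : 2 * (1 / δ ^ 2) * (δ ^ 2 * a) = 2 * a := by field_simp
    linarith
  -- key polynomial estimate
  have hkey : 4 * s ^ 2 + 2 * s * n - a * n ≤ K * M * b := by
    rcases le_or_gt 0 s with hsp | hsn
    · -- s ≥ 0 : N ≤ 2M(2s+n) ≤ 2Mb ≤ KMb
      have habs : s ≤ M := le_trans (le_abs_self s) hMs
      have h1 : 4 * s ^ 2 + 2 * s * n - a * n ≤ 2 * M * b := by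
        nlinarith [mul_nonneg (sub_nonneg.mpr habs) hsp,
          mul_nonneg (sub_nonneg.mpr habs) hnn,
          mul_nonneg hapos.le hnn, mul_nonneg hM0 hapos.le]
      calc 4 * s ^ 2 + 2 * s * n - a * n ≤ 2 * M * b := h1
      _ = M * (2 * b) := by ring
      _ ≤ M * (K * b) := mul_le_mul_of_nonneg_left hKb2b hM0
      _ = K * M * b := by ring
    · -- s < 0 : N ≤ 2aM ≤ KMb
      have hu : (0:ℝ) ≤ -s := by linarith
      have habs : -s ≤ M := by rw [abs_of_neg hsn] at hMs; linarith
      have h1 : 4 * s ^ 2 + 2 * s * n - a * n ≤ 2 * a * M := by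
        rcases eq_or_lt_of_le hnn with h0 | hnpos
        · have hs0 : s = 0 := by nlinarith [sq_nonneg s]
          rw [hs0]; nlinarith [mul_nonneg hapos.le hM0, mul_nonneg hapos.le hnn]
        · have hA : 0 ≤ n * (a * n) - n * s ^ 2 :=
            sub_nonneg.mpr (mul_le_mul_of_nonneg_left hCS hnn)
          have hquad : (0:ℝ) ≤ 2 * s ^ 2 + 3 * s * n + 2 * n ^ 2 := by
            nlinarith [sq_nonneg (s + n), mul_nonneg hu hnn]
          have hB : 0 ≤ (-s) * (2 * s ^ 2 + 3 * s * n + 2 * n ^ 2) :=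
            mul_nonneg hu hquad
          have hC : 0 ≤ (-s) * (a * n) - (-s) * s ^ 2 :=
            sub_nonneg.mpr (mul_le_mul_of_nonneg_left hCS hu)
          have hD : 0 ≤ (a * n) * M - (a * n) * (-s) :=
            sub_nonneg.mpr (mul_le_mul_of_nonneg_left habs (mul_nonneg hapos.le hnn))
          have hn1 : n * (4 * s ^ 2 + 2 * s * n - a * n) ≤ n * (2 * a * M) := by
            linarith [hA, hB, hC, hD]
          exact le_of_mul_le_mul_left hn1 hnpos
      calc 4 * s ^ 2 + 2 * s * n - a * n ≤ 2 * a * M := h1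
      _ = M * (2 * a) := by ring
      _ ≤ M * (K * b) := mul_le_mul_of_nonneg_left hKb2a hM0
      _ = K * M * b := by ring
  -- assemble
  have hLHS : 1 / b - 1 / a + 2 * s / a ^ 2
      = (4 * s ^ 2 + 2 * s * n - a * n) / (a ^ 2 * b) := by
    have hbne : a + 2 * s + n ≠ 0 := by rw [← hexp]; exact hbpos'.ne'
    rw [hexp]; field_simp [hbne, hapos.ne']; ring
  have ha4 : ‖x‖ ^ 4 = a ^ 2 := by rw [ha]; ring
  rw [ha4, hLHS, div_le_div_iff₀ (by positivity) (by positivity)]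
  calc (4 * s ^ 2 + 2 * s * n - a * n) * a ^ 2 ≤ (K * M * b) * a ^ 2 :=
        mul_le_mul_of_nonneg_right hkey (sq_nonneg a)
  _ = K * M * (a ^ 2 * b) := by ring
end

section
/- Let a, w be vectors in d-dimensional Euclidean space ℝ^d with a ≠ 0. Then ‖a+w‖/(1+‖a+w‖) − ‖a‖/(1+‖a‖) − ⟨a,w⟩/(‖a‖(1+‖a‖)²) ≤ 2‖w‖/(1+‖a‖)². -/
/-- First-order jump estimate for `F(r) = r/(1+r)` (eq2-F estimate):
for `a ≠ 0`,
`F(‖a+w‖) − F(‖a‖) − ⟨a,w⟩/(‖a‖(1+‖a‖)²) ≤ 2‖w‖/(1+‖a‖)²`. -/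
theorem F_jump_first_order
    (d : ℕ) (a w : EuclideanSpace ℝ (Fin d)) (ha : a ≠ 0) :
    ‖a + w‖ / (1 + ‖a + w‖) - ‖a‖ / (1 + ‖a‖)
        - (inner ℝ a w : ℝ) / (‖a‖ * (1 + ‖a‖) ^ 2)
      ≤ 2 * ‖w‖ / (1 + ‖a‖) ^ 2 := by
  set s := ‖a‖ with hs_def
  set r := ‖a + w‖ with hr_def
  have hs : 0 < s := norm_pos_iff.mpr ha
  have hr : 0 ≤ r := norm_nonneg _
  have h1s : (0:ℝ) < 1 + s := by linarith
  have h1r : (0:ℝ) < 1 + r := by linarith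
  have hrs : r - s ≤ ‖w‖ := by
    have := norm_sub_norm_le (a + w) a
    simpa using this
  have hw : 0 ≤ ‖w‖ := norm_nonneg _
  -- Claim 1
  have claim1 : r / (1 + r) - s / (1 + s) ≤ ‖w‖ / (1 + s) ^ 2 := by
    rcases le_or_gt r s with h | h
    · have hle : r / (1 + r) ≤ s / (1 + s) := by
        rw [div_le_div_iff₀ h1r h1s]; nlinarith
      have : (0:ℝ) ≤ ‖w‖ / (1 + s) ^ 2 := by positivity
      linarith
    · have heq : r / (1 + r) - s / (1 + s) = (r - s) / ((1 + r) * (1 + s)) := by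
        field_simp; ring
      rw [heq]
      have hden : (1 + s) ^ 2 ≤ (1 + r) * (1 + s) := by nlinarith
      calc (r - s) / ((1 + r) * (1 + s)) ≤ (r - s) / (1 + s) ^ 2 := by
            apply div_le_div_of_nonneg_left (by linarith) (by positivity) hden
        _ ≤ ‖w‖ / (1 + s) ^ 2 := by
            apply div_le_div_of_nonneg_right hrs (by positivity)
  -- Claim 2
  have hinner : -(s * ‖w‖) ≤ (inner ℝ a w : ℝ) := by
    have := abs_real_inner_le_norm a w
    have := abs_le.mp this
    linarith [this.1]
  have claim2 : -((inner ℝ a w : ℝ) / (s * (1 + s) ^ 2)) ≤ ‖w‖ / (1 + s) ^ 2 := by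
    rw [neg_div' ] at *
    rw [div_le_div_iff₀ (by positivity) (by positivity)]
    nlinarith [sq_nonneg (1 + s)]
  have : 2 * ‖w‖ / (1 + s) ^ 2 = ‖w‖ / (1 + s) ^ 2 + ‖w‖ / (1 + s) ^ 2 := by ring
  rw [this]
  linarith
end

section
/- Let a, w be vectors in d-dimensional Euclidean space ℝ^d with a ≠ 0. Then ‖a+w‖/(1+‖a+w‖) − ‖a‖/(1+‖a‖) − ⟨a,w⟩/(‖a‖(1+‖a‖)²) ≤ ‖w‖²/(2‖a‖(1+‖a‖)²). -/
/-- Second-order jump estimate for `F(r) = r/(1+r)` (eq1-F estimate):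
for `a ≠ 0`,
`F(‖a+w‖) − F(‖a‖) − ⟨a,w⟩/(‖a‖(1+‖a‖)²) ≤ ‖w‖²/(2‖a‖(1+‖a‖)²)`. -/
theorem F_jump_second_order
    (d : ℕ) (a w : EuclideanSpace ℝ (Fin d)) (ha : a ≠ 0) :
    ‖a + w‖ / (1 + ‖a + w‖) - ‖a‖ / (1 + ‖a‖)
        - (inner ℝ a w : ℝ) / (‖a‖ * (1 + ‖a‖) ^ 2)
      ≤ ‖w‖ ^ 2 / (2 * ‖a‖ * (1 + ‖a‖) ^ 2) := by
  set r := ‖a‖ with hrdef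
  set s := ‖a + w‖ with hsdef
  set ip := (inner ℝ a w : ℝ) with hipdef
  set nw := ‖w‖ with hnwdef
  have hr : 0 < r := norm_pos_iff.mpr ha
  have hs : 0 ≤ s := norm_nonneg _
  have key : s ^ 2 = r ^ 2 + 2 * ip + nw ^ 2 := by
    rw [hsdef, hrdef, hipdef, hnwdef]
    simpa [sq] using norm_add_sq_real a w
  have h1 : (0:ℝ) < 1 + r := by linarith
  have h2 : (0:ℝ) < 1 + s := by linarith
  have e1 : s / (1 + s) - r / (1 + r) = (s - r) / ((1 + s) * (1 + r)) := by
    field_simp; ring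
  have stepA : (s - r) / ((1 + s) * (1 + r)) ≤ (s - r) / ((1 + r) ^ 2) := by
    rw [div_le_div_iff₀ (by positivity) (by positivity)]
    nlinarith [sq_nonneg (s - r)]
  have e2 : (s - r) / ((1 + r) ^ 2) - ip / (r * (1 + r) ^ 2)
      = (r * (s - r) - ip) / (r * (1 + r) ^ 2) := by
    field_simp
  have stepB : (r * (s - r) - ip) / (r * (1 + r) ^ 2)
      ≤ nw ^ 2 / (2 * r * (1 + r) ^ 2) := by
    rw [div_le_div_iff₀ (by positivity) (by positivity)]
    have hnw : nw ^ 2 = s ^ 2 - r ^ 2 - 2 * ip := by linarith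
    rw [hnw]
    nlinarith [mul_nonneg (mul_nonneg hr.le (sq_nonneg (s - r))) (sq_nonneg (1 + r))]
  linarith [stepA, stepB, e1, e2]
end

section
/- Let a, w be vectors in d-dimensional Euclidean space ℝ^d with a ≠ 0. Then ‖a+w‖/(1+‖a+w‖) − ‖a‖/(1+‖a‖) − ⟨a,w⟩/(‖a‖(1+‖a‖)²) ≤ min( ‖w‖², 4‖a‖·‖w‖ ) / (2‖a‖(1+‖a‖)²). -/
private lemma F_jump_real (A B W s : ℝ) (hA : 0 < A) (hB : 0 ≤ B)
    (hW : 0 ≤ W) (hs1 : s ≤ A*W) (hs2 : -(A*W) ≤ s)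
    (hsq : B^2 = A^2 + 2*s + W^2) :
    B/(1+B) - A/(1+A) - s/(A*(1+A)^2) ≤ min (W^2) (4*A*W) / (2*A*(1+A)^2) := by
  have h1A : (0:ℝ) < 1 + A := by linarith
  have h1B : (0:ℝ) < 1 + B := by linarith
  have key : B/(1+B) - A/(1+A) ≤ (B-A)/(1+A)^2 := by
    rw [div_sub_div _ _ h1B.ne' h1A.ne', div_le_div_iff₀ (by positivity) (by positivity)]
    nlinarith [sq_nonneg (B - A), h1A.le]
  have hD : (0:ℝ) < 2*A*(1+A)^2 := by positivity
  have hBle : B ≤ A + W := by nlinarith [hs1, hB, hA.le, hW]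
  rcases le_total (W^2) (4*A*W) with h | h
  · rw [min_eq_left h]
    have key2 : 2*A*(B-A) - 2*s ≤ W^2 := by nlinarith [sq_nonneg (A - B)]
    have : (B-A)/(1+A)^2 - s/(A*(1+A)^2) ≤ W^2/(2*A*(1+A)^2) := by
      rw [div_sub_div _ _ (by positivity) (by positivity), div_le_div_iff₀ (by positivity) hD]
      nlinarith [mul_le_mul_of_nonneg_right key2 (show (0:ℝ) ≤ A*(1+A)^4 by positivity)]
    linarith
  · rw [min_eq_right h]
    have num2 : A*(B-A) - s ≤ 2*A*W := by
      have h1 := mul_le_mul_of_nonneg_left (show B - A ≤ W by linarith) hA.le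
      linarith
    have : (B-A)/(1+A)^2 - s/(A*(1+A)^2) ≤ (4*A*W)/(2*A*(1+A)^2) := by
      rw [div_sub_div _ _ (by positivity) (by positivity), div_le_div_iff₀ (by positivity) hD]
      nlinarith [mul_le_mul_of_nonneg_right num2 (show (0:ℝ) ≤ 2*A*(1+A)^4 by positivity)]
    linarith

/-- Combined jump estimate for `F(r) = r/(1+r)` (eq-F estimate):
for `a ≠ 0`,
`F(‖a+w‖) − F(‖a‖) − ⟨a,w⟩/(‖a‖(1+‖a‖)²) ≤ min(‖w‖², 4‖a‖‖w‖)/(2‖a‖(1+‖a‖)²)`. -/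
theorem F_jump_combined
    (d : ℕ) (a w : EuclideanSpace ℝ (Fin d)) (ha : a ≠ 0) :
    ‖a + w‖ / (1 + ‖a + w‖) - ‖a‖ / (1 + ‖a‖)
        - (inner ℝ a w : ℝ) / (‖a‖ * (1 + ‖a‖) ^ 2)
      ≤ min (‖w‖ ^ 2) (4 * ‖a‖ * ‖w‖) / (2 * ‖a‖ * (1 + ‖a‖) ^ 2) := by
  have hA : 0 < ‖a‖ := norm_pos_iff.mpr ha
  have habs : |(inner ℝ a w : ℝ)| ≤ ‖a‖ * ‖w‖ := abs_real_inner_le_norm a w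
  rw [abs_le] at habs
  exact F_jump_real ‖a‖ ‖a + w‖ ‖w‖ (inner ℝ a w) hA (norm_nonneg _) (norm_nonneg _)
    habs.2 habs.1 (by rw [norm_add_sq_real])
end
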